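/- For the modified lodgepole tree M_n, the number of root ancestral configurations is c(M_n) = 3·2^n − 2 and the number of labeled histories is h(M_n) = (2n)!! = 2·4·6···(2n). -/

import Mathlib

/-- Binary rooted trees (leaf labels abstracted away; leaves are identified
by their positions, encoded as lists of booleans). -/
inductive BTree : Type
  | leaf : BTree
  | node : BTree → BTree → BTree
  deriving DecidableEq

namespace BTree

/-- A position in a binary tree: a path from the root, `false` = left, `true` = right. -/
abbrev Pos := List Bool

/-- The subtree rooted at a position (junk value `leaf` below a leaf). -/
def subtreeAt : BTree → Pos → BTree
  | t, [] => t
  | leaf, _ :: _ => leaf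
  | node l _, false :: p => subtreeAt l p
  | node _ r, true :: p => subtreeAt r p

/-- `p` is a valid position (node) of the tree. -/
def isValidPos : BTree → Pos → Prop
  | _, [] => True
  | leaf, _ :: _ => False
  | node l _, false :: p => isValidPos l p
  | node _ r, true :: p => isValidPos r p

/-- The set of positions of the leaves of a tree. -/
def leafPositions : BTree → Finset Pos
  | leaf => {([] : Pos)}
  | node l r =>
      (leafPositions l).image (false :: ·) ∪ (leafPositions r).image (true :: ·)

/-- The number of leaves of a tree. -/
def numLeaves (t : BTree) : ℕ := (leafPositions t).card

/-- The set of positions of the internal (non-leaf) nodes of a tree. -/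
def internalPos : BTree → Finset Pos
  | leaf => ∅
  | node l r =>
      insert ([] : Pos)
        ((internalPos l).image (false :: ·) ∪ (internalPos r).image (true :: ·))

/-- A root ancestral configuration of `S`: an antichain of non-root nodes of `S`
whose descendant-leaf sets partition the leaf set, i.e. a set of valid non-root
positions such that every leaf position has exactly one weak ancestor in the set. -/
def IsConfig (S : BTree) (A : Finset Pos) : Prop :=
  (∀ p ∈ A, isValidPos S p ∧ p ≠ []) ∧
  ∀ q ∈ leafPositions S, ∃! p, p ∈ A ∧ p <+: q

/-- The partial order on configurations: `ConfigLE A B` (that is, `A ≺ B`) iff `B`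
is obtained from `A` by coalescing some (possibly no) pairs of lineages;
equivalently, every node of `A` is a weak descendant of some node of `B`. -/
def ConfigLE (A B : Finset Pos) : Prop :=
  ∀ p ∈ A, ∃ q ∈ B, q <+: p

/-- The covering relation on root ancestral configurations of `S`. -/
def Covers (S : BTree) (A B : Finset Pos) : Prop :=
  IsConfig S A ∧ IsConfig S B ∧ ConfigLE A B ∧ A ≠ B ∧
  ∀ C, IsConfig S C → ConfigLE A C → ConfigLE C B → C = A ∨ C = B

/-- The maximal root configuration: the two children of the root. -/
def rootConfig : Finset Pos := {[false], [true]}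

/-- The number of root ancestral configurations of `S`. -/
noncomputable def numConfigs (S : BTree) : ℕ := Nat.card {A : Finset Pos // IsConfig S A}

/-- A labeled history of `S`: a linear ordering of the internal nodes of `S`
in which every internal node appears after all of its internal descendants. -/
def IsLabHist (S : BTree) (L : List Pos) : Prop :=
  L.Nodup ∧ (∀ p, p ∈ L ↔ p ∈ internalPos S) ∧
  ∀ i j : Fin L.length, L.get i <+: L.get j → (j : ℕ) ≤ (i : ℕ)

/-- The number of labeled histories of `S`. -/
noncomputable def numHist (S : BTree) : ℕ := Nat.card {L : List Pos // IsLabHist S L}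

/-- The caterpillar tree on `n` leaves (`caterpillar 1` is a single leaf). -/
def caterpillar : ℕ → BTree
  | 0 => leaf
  | 1 => leaf
  | n + 2 => node (caterpillar (n + 1)) leaf

end BTree

open BTree

/-- The modified lodgepole trees: `M_0` is a cherry and `M_n` has root subtrees
`M_{n-1}` and a cherry. -/
def modLodgepole : ℕ → BTree
  | 0 => node BTree.leaf BTree.leaf
  | n + 1 => node (modLodgepole n) (node BTree.leaf BTree.leaf)

namespace BTree

/-- Configurations allowed to contain the root. -/
def IsConfigR (S : BTree) (A : Finset Pos) : Prop :=
  (∀ p ∈ A, isValidPos S p) ∧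
  ∀ q ∈ leafPositions S, ∃! p, p ∈ A ∧ p <+: q

lemma cons_inj (b : Bool) : Function.Injective (fun p : Pos => b :: p) :=
  fun _ _ h => by simpa using h

@[simp] lemma isValidPos_nil (S : BTree) : isValidPos S [] := by
  cases S <;> trivial

noncomputable def downF (b : Bool) (A : Finset Pos) : Finset Pos :=
  A.preimage (b :: ·) ((cons_inj b).injOn)

@[simp] lemma mem_downF {b : Bool} {A : Finset Pos} {p : Pos} :
    p ∈ downF b A ↔ b :: p ∈ A := Finset.mem_preimage

def upF (b : Bool) (B : Finset Pos) : Finset Pos := B.image (b :: ·)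

@[simp] lemma cons_mem_upF {b : Bool} {B : Finset Pos} {p : Pos} :
    b :: p ∈ upF b B ↔ p ∈ B := by
  simp [upF]

lemma mem_upF {b : Bool} {B : Finset Pos} {q : Pos} :
    q ∈ upF b B ↔ ∃ p ∈ B, q = b :: p := by
  simp [upF, eq_comm]

lemma mem_leafPositions_node {l r : BTree} {q : Pos} :
    q ∈ leafPositions (node l r) ↔
      (∃ q' ∈ leafPositions l, q = false :: q') ∨
      (∃ q' ∈ leafPositions r, q = true :: q') := by
  simp [leafPositions, eq_comm]

lemma exists_leaf_ext : ∀ (S : BTree) (p : Pos), isValidPos S p →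
    ∃ q ∈ leafPositions S, p <+: q := by
  intro S
  induction S with
  | leaf =>
      intro p hp
      cases p with
      | nil => exact ⟨[], by simp [leafPositions], List.nil_prefix⟩
      | cons b t => exact hp.elim
  | node l r ihl ihr =>
      intro p hp
      cases p with
      | nil =>
          obtain ⟨q, hq, -⟩ := ihl [] (isValidPos_nil l)
          exact ⟨false :: q, mem_leafPositions_node.2 (Or.inl ⟨q, hq, rfl⟩),
            List.nil_prefix⟩
      | cons b t =>
          cases b with
          | false =>
              obtain ⟨q, hq, hpre⟩ := ihl t hp
              exact ⟨false :: q, mem_leafPositions_node.2 (Or.inl ⟨q, hq, rfl⟩),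
                List.cons_prefix_cons.2 ⟨rfl, hpre⟩⟩
          | true =>
              obtain ⟨q, hq, hpre⟩ := ihr t hp
              exact ⟨true :: q, mem_leafPositions_node.2 (Or.inr ⟨q, hq, rfl⟩),
                List.cons_prefix_cons.2 ⟨rfl, hpre⟩⟩

lemma isConfigR_downF {l r : BTree} {A : Finset Pos} (h : IsConfig (node l r) A)
    (b : Bool) : IsConfigR (if b then r else l) (downF b A) := by
  constructor
  · intro p hp
    have := (h.1 (b :: p) (mem_downF.1 hp)).1
    cases b <;> exact this
  · intro q hq
    have hq' : b :: q ∈ leafPositions (node l r) := by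
      cases b
      · exact mem_leafPositions_node.2 (Or.inl ⟨q, by simpa using hq, rfl⟩)
      · exact mem_leafPositions_node.2 (Or.inr ⟨q, by simpa using hq, rfl⟩)
    obtain ⟨p, ⟨hpA, hpre⟩, huniq⟩ := h.2 (b :: q) hq'
    obtain ⟨b', p', rfl⟩ := List.exists_cons_of_ne_nil ((h.1 p hpA).2)
    obtain ⟨rfl, hp'⟩ := List.cons_prefix_cons.1 hpre
    refine ⟨p', ⟨mem_downF.2 hpA, hp'⟩, ?_⟩
    rintro y ⟨hyA, hypre⟩
    have := huniq (b' :: y) ⟨mem_downF.1 hyA, List.cons_prefix_cons.2 ⟨rfl, hypre⟩⟩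
    simpa using this

lemma isConfig_node {l r : BTree} {B C : Finset Pos}
    (hB : IsConfigR l B) (hC : IsConfigR r C) :
    IsConfig (node l r) (upF false B ∪ upF true C) := by
  constructor
  · intro p hp
    rcases Finset.mem_union.1 hp with hp | hp
    · obtain ⟨p', hp', rfl⟩ := mem_upF.1 hp
      exact ⟨hB.1 p' hp', by simp⟩
    · obtain ⟨p', hp', rfl⟩ := mem_upF.1 hp
      exact ⟨hC.1 p' hp', by simp⟩
  · intro q hq
    rcases mem_leafPositions_node.1 hq with ⟨q', hq', rfl⟩ | ⟨q', hq', rfl⟩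
    · obtain ⟨p', ⟨hp'B, hpre⟩, huniq⟩ := hB.2 q' hq'
      refine ⟨false :: p', ⟨Finset.mem_union_left _ (cons_mem_upF.2 hp'B),
        List.cons_prefix_cons.2 ⟨rfl, hpre⟩⟩, ?_⟩
      rintro y ⟨hy, hypre⟩
      rcases Finset.mem_union.1 hy with hy | hy
      · obtain ⟨y', hy', rfl⟩ := mem_upF.1 hy
        obtain ⟨-, hy''⟩ := List.cons_prefix_cons.1 hypre
        exact congrArg (false :: ·) (huniq y' ⟨hy', hy''⟩)
      · obtain ⟨y', hy', rfl⟩ := mem_upF.1 hy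
        obtain ⟨h1, -⟩ := List.cons_prefix_cons.1 hypre
        exact absurd h1 (by simp)
    · obtain ⟨p', ⟨hp'C, hpre⟩, huniq⟩ := hC.2 q' hq'
      refine ⟨true :: p', ⟨Finset.mem_union_right _ (cons_mem_upF.2 hp'C),
        List.cons_prefix_cons.2 ⟨rfl, hpre⟩⟩, ?_⟩
      rintro y ⟨hy, hypre⟩
      rcases Finset.mem_union.1 hy with hy | hy
      · obtain ⟨y', hy', rfl⟩ := mem_upF.1 hy
        obtain ⟨h1, -⟩ := List.cons_prefix_cons.1 hypre
        exact absurd h1 (by simp)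
      · obtain ⟨y', hy', rfl⟩ := mem_upF.1 hy
        obtain ⟨-, hy''⟩ := List.cons_prefix_cons.1 hypre
        exact congrArg (true :: ·) (huniq y' ⟨hy', hy''⟩)

lemma up_down {A : Finset Pos} (h : ∀ p ∈ A, p ≠ []) :
    upF false (downF false A) ∪ upF true (downF true A) = A := by
  ext q
  constructor
  · intro hq
    rcases Finset.mem_union.1 hq with hq | hq <;>
      · obtain ⟨p, hp, rfl⟩ := mem_upF.1 hq
        exact mem_downF.1 hp
  · intro hq
    obtain ⟨b, t, rfl⟩ := List.exists_cons_of_ne_nil (h q hq)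
    cases b
    · exact Finset.mem_union_left _ (cons_mem_upF.2 (mem_downF.2 hq))
    · exact Finset.mem_union_right _ (cons_mem_upF.2 (mem_downF.2 hq))

lemma down_up {B C : Finset Pos} (b : Bool) :
    downF b (upF false B ∪ upF true C) = (if b then C else B) := by
  ext p
  cases b <;> simp [mem_upF]

noncomputable def configEquiv (l r : BTree) :
    {A // IsConfig (node l r) A} ≃ {A // IsConfigR l A} × {A // IsConfigR r A} where
  toFun A := (⟨downF false A.1, isConfigR_downF A.2 false⟩,
              ⟨downF true A.1, isConfigR_downF A.2 true⟩)
  invFun BC := ⟨upF false BC.1.1 ∪ upF true BC.2.1, isConfig_node BC.1.2 BC.2.2⟩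
  left_inv := by
    rintro ⟨A, hA⟩
    exact Subtype.ext (up_down (fun p hp => (hA.1 p hp).2))
  right_inv := by
    rintro ⟨⟨B, hB⟩, ⟨C, hC⟩⟩
    refine Prod.ext (Subtype.ext ?_) (Subtype.ext ?_)
    · simpa using down_up (B := B) (C := C) false
    · simpa using down_up (B := B) (C := C) true

lemma isConfigR_singleton_nil (S : BTree) : IsConfigR S {([] : Pos)} := by
  constructor
  · intro p hp
    rw [Finset.mem_singleton] at hp
    subst hp; exact isValidPos_nil S
  · intro q hq
    exact ⟨[], ⟨Finset.mem_singleton_self _, List.nil_prefix⟩,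
      fun y hy => Finset.mem_singleton.1 hy.1⟩

lemma configR_nil_mem {S : BTree} {A : Finset Pos} (h : IsConfigR S A)
    (hmem : ([] : Pos) ∈ A) : A = {([] : Pos)} := by
  ext p
  simp only [Finset.mem_singleton]
  constructor
  · intro hp
    obtain ⟨q, hq, hpre⟩ := exists_leaf_ext S p (h.1 p hp)
    obtain ⟨u, -, huniq⟩ := h.2 q hq
    have h1 := huniq [] ⟨hmem, List.nil_prefix⟩
    have h2 := huniq p ⟨hp, hpre⟩
    exact h2.trans h1.symm
  · rintro rfl; exact hmem

lemma isConfig_of_configR {S : BTree} {A : Finset Pos} (h : IsConfigR S A)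
    (hnil : ([] : Pos) ∉ A) : IsConfig S A :=
  ⟨fun p hp => ⟨h.1 p hp, fun he => hnil (he ▸ hp)⟩, h.2⟩

noncomputable def configROptionEquiv (S : BTree) :
    {A // IsConfigR S A} ≃ Option {A // IsConfig S A} where
  toFun A := if h : ([] : Pos) ∈ A.1 then none
    else some ⟨A.1, isConfig_of_configR A.2 h⟩
  invFun o := o.elim ⟨{([] : Pos)}, isConfigR_singleton_nil S⟩
    (fun A => ⟨A.1, fun p hp => (A.2.1 p hp).1, A.2.2⟩)
  left_inv := by
    rintro ⟨A, hA⟩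
    by_cases h : ([] : Pos) ∈ A
    · simp only [h, dif_pos]
      exact Subtype.ext (configR_nil_mem hA h).symm
    · simp only [h, dif_neg, not_false_iff]
      rfl
  right_inv := by
    rintro (_ | ⟨A, hA⟩)
    · simp
    · have h : ([] : Pos) ∉ A := fun hm => (hA.1 [] hm).2 rfl
      simp [h]

lemma not_isConfig_leaf (A : Finset Pos) : ¬ IsConfig leaf A := by
  intro h
  obtain ⟨p, ⟨hp, hpre⟩, -⟩ := h.2 [] (by simp [leafPositions])
  exact (h.1 p hp).2 (List.prefix_nil.1 hpre)

lemma finite_config : ∀ S : BTree, Finite {A // IsConfig S A}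
  | leaf => by
      have : IsEmpty {A // IsConfig leaf A} :=
        ⟨fun A => not_isConfig_leaf A.1 A.2⟩
      infer_instance
  | node l r => by
      have hl := finite_config l
      have hr := finite_config r
      have h1 : Finite {A // IsConfigR l A} :=
        Finite.of_equiv _ (((configROptionEquiv l).trans
          (Equiv.optionEquivSumPUnit.{0,0} _)).symm)
      have h2 : Finite {A // IsConfigR r A} :=
        Finite.of_equiv _ (((configROptionEquiv r).trans
          (Equiv.optionEquivSumPUnit.{0,0} _)).symm)
      exact Finite.of_equiv _ (configEquiv l r).symm

lemma card_configR (S : BTree) :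
    Nat.card {A // IsConfigR S A} = numConfigs S + 1 := by
  have := finite_config S
  have e : {A // IsConfigR S A} ≃ ({A // IsConfig S A} ⊕ PUnit.{1}) :=
    (configROptionEquiv S).trans (Equiv.optionEquivSumPUnit _)
  rw [Nat.card_congr e, Nat.card_sum]
  simp [numConfigs]

lemma numConfigs_node (l r : BTree) :
    numConfigs (node l r) = (numConfigs l + 1) * (numConfigs r + 1) := by
  rw [numConfigs, Nat.card_congr (configEquiv l r), Nat.card_prod,
    card_configR, card_configR]

end BTree
namespace BTree

/-- Reformulation of labeled histories via `Pairwise`. -/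
def Hist (S : BTree) (L : List Pos) : Prop :=
  L.Nodup ∧ (∀ p, p ∈ L ↔ p ∈ internalPos S) ∧
    L.Pairwise (fun a b => ¬ a <+: b)

lemma isLabHist_iff_hist {S : BTree} {L : List Pos} :
    IsLabHist S L ↔ Hist S L := by
  constructor
  · rintro ⟨h1, h2, h3⟩
    refine ⟨h1, h2, List.pairwise_iff_get.2 fun i j hij hpre => ?_⟩
    have := h3 i j hpre
    omega
  · rintro ⟨h1, h2, h3⟩
    refine ⟨h1, h2, fun i j hpre => ?_⟩
    by_contra hc
    push_neg at hc
    exact List.pairwise_iff_get.1 h3 i j (by omega) hpre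

lemma mem_internalPos_node {l r : BTree} {p : Pos} :
    p ∈ internalPos (node l r) ↔
      p = [] ∨ (∃ y ∈ internalPos l, p = false :: y) ∨
        (∃ y ∈ internalPos r, p = true :: y) := by
  simp [internalPos, eq_comm]

lemma internalPos_cherry : internalPos (node leaf leaf) = {([] : Pos)} := by
  simp [internalPos]

lemma mem_internal_nc {l : BTree} {p : Pos} :
    p ∈ internalPos (node l (node leaf leaf)) ↔
      p = [] ∨ p = [true] ∨ ∃ y ∈ internalPos l, p = false :: y := by
  rw [mem_internalPos_node, internalPos_cherry]
  simp only [Finset.mem_singleton]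
  constructor
  · rintro (rfl | hy | ⟨y, rfl, rfl⟩)
    · exact Or.inl rfl
    · exact Or.inr (Or.inr hy)
    · exact Or.inr (Or.inl rfl)
  · rintro (rfl | rfl | hy)
    · exact Or.inl rfl
    · exact Or.inr (Or.inr ⟨[], rfl, rfl⟩)
    · exact Or.inr (Or.inl hy)

lemma card_internalPos_node (l r : BTree) :
    (internalPos (node l r)).card =
      (internalPos l).card + (internalPos r).card + 1 := by
  show (insert ([] : Pos)
      ((internalPos l).image (false :: ·) ∪ (internalPos r).image (true :: ·))).card = _
  rw [Finset.card_insert_of_notMem, Finset.card_union_of_disjoint,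
    Finset.card_image_of_injective _ (cons_inj false),
    Finset.card_image_of_injective _ (cons_inj true)]
  · rw [Finset.disjoint_left]
    rintro a ha hb
    obtain ⟨y, -, rfl⟩ := Finset.mem_image.1 ha
    obtain ⟨z, -, hz⟩ := Finset.mem_image.1 hb
    simp at hz
  · simp

lemma hist_length {S : BTree} {L : List Pos} (h : Hist S L) :
    L.length = (internalPos S).card := by
  rw [← List.toFinset_card_of_nodup h.1]
  congr 1
  ext p
  rw [List.mem_toFinset]
  exact h.2.1 p

/-- Assembling a history of `node l cherry` from a history of `l` and
the insertion point of the cherry root. -/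
def assemble (L' : List Pos) (k : ℕ) : List Pos :=
  (L'.map (false :: ·)).take k ++
    ([true] : Pos) :: ((L'.map (false :: ·)).drop k ++ [([] : Pos)])

lemma filter_assemble (L' : List Pos) (k : ℕ) :
    ((assemble L' k).filter (fun p => p.head? == some false)).map List.tail = L' := by
  have h1 : ∀ x ∈ (L'.map (false :: ·)).take k, (x.head? == some false) = true := by
    intro x hx
    obtain ⟨y, -, rfl⟩ := List.mem_map.1 (List.mem_of_mem_take hx)
    rfl
  have h2 : ∀ x ∈ (L'.map (false :: ·)).drop k, (x.head? == some false) = true := by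
    intro x hx
    obtain ⟨y, -, rfl⟩ := List.mem_map.1 (List.mem_of_mem_drop hx)
    rfl
  rw [assemble, List.filter_append, List.filter_cons]
  rw [List.filter_eq_self.2 h1, List.filter_append, List.filter_eq_self.2 h2]
  norm_num
  have he : (List.tail ∘ fun x : Pos => false :: x) = id := rfl
  rw [he, List.map_id]

/-- The insertion point of the cherry root in a history. -/
def insPt (L : List Pos) : ℕ :=
  (L.takeWhile (fun p => p.head? == some false)).length

lemma takeWhile_helper {q : Pos → Bool} {T1 rest : List Pos} {b : Pos}
    (h : ∀ x ∈ T1, q x = true) (hb : q b = false) :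
    (T1 ++ b :: rest).takeWhile q = T1 := by
  induction T1 with
  | nil => simp [List.takeWhile_cons, hb]
  | cons a t ih =>
      have ha := h a List.mem_cons_self
      simp only [List.cons_append, List.takeWhile_cons, ha, if_true]
      rw [ih (fun x hx => h x (List.mem_cons.2 (Or.inr hx)))]

lemma insPt_assemble (L' : List Pos) (k : ℕ) (hk : k ≤ L'.length) :
    insPt (assemble L' k) = k := by
  rw [insPt, assemble, takeWhile_helper, List.length_take, List.length_map]
  · omega
  · intro x hx
    obtain ⟨y, -, rfl⟩ := List.mem_map.1 (List.mem_of_mem_take hx)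
    rfl
  · rfl

lemma pairwise_R_map {L' : List Pos}
    (h : L'.Pairwise (fun a b => ¬ a <+: b)) :
    (L'.map (false :: ·)).Pairwise (fun a b => ¬ a <+: b) := by
  rw [List.pairwise_map]
  exact h.imp (fun hab h' => hab (List.cons_prefix_cons.1 h').2)

lemma hist_assemble {l : BTree} {L' : List Pos} {k : ℕ}
    (h : Hist l L') (hk : k ≤ L'.length) :
    Hist (node l (node leaf leaf)) (assemble L' k) := by
  set M := L'.map (false :: ·) with hM
  have hheads : ∀ x ∈ M, ∃ y, y ∈ L' ∧ x = false :: y := by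
    intro x hx
    obtain ⟨y, hy, rfl⟩ := List.mem_map.1 hx
    exact ⟨y, hy, rfl⟩
  have hperm : List.Perm (assemble L' k) (([true] : Pos) :: (([] : Pos) :: M)) := by
    have e1 : List.Perm (assemble L' k)
        (([true] : Pos) :: (M.take k ++ (M.drop k ++ [([] : Pos)]))) :=
      List.perm_middle
    rw [← List.append_assoc, List.take_append_drop] at e1
    exact e1.trans (List.Perm.cons _ (List.perm_append_singleton _ _))
  have hMnodup : M.Nodup := h.1.map (cons_inj false)
  refine ⟨?_, ?_, ?_⟩
  · rw [hperm.nodup_iff]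
    simp only [List.nodup_cons, List.mem_cons]
    refine ⟨?_, ?_, hMnodup⟩
    · push_neg
      refine ⟨by simp, fun hx => ?_⟩
      obtain ⟨y, -, hy⟩ := hheads _ hx
      simp at hy
    · intro hx
      obtain ⟨y, -, hy⟩ := hheads _ hx
      simp at hy
  · intro p
    rw [hperm.mem_iff, mem_internal_nc]
    simp only [List.mem_cons]
    constructor
    · rintro (rfl | rfl | hp)
      · exact Or.inr (Or.inl rfl)
      · exact Or.inl rfl
      · obtain ⟨y, hy, rfl⟩ := hheads _ hp
        exact Or.inr (Or.inr ⟨y, (h.2.1 y).1 hy, rfl⟩)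
    · rintro (rfl | rfl | ⟨y, hy, rfl⟩)
      · exact Or.inr (Or.inl rfl)
      · exact Or.inl rfl
      · exact Or.inr (Or.inr (List.mem_map.2 ⟨y, (h.2.1 y).2 hy, rfl⟩))
  · have hpw : M.Pairwise (fun a b => ¬ a <+: b) := pairwise_R_map h.2.2
    rw [show M = M.take k ++ M.drop k from (List.take_append_drop k M).symm,
      List.pairwise_append] at hpw
    obtain ⟨h1, h2, h12⟩ := hpw
    rw [assemble, List.pairwise_append]
    refine ⟨h1, ?_, ?_⟩
    · rw [List.pairwise_cons]
      constructor
      · intro b hb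
        rcases List.mem_append.1 hb with hb | hb
        · obtain ⟨y, -, rfl⟩ := hheads b (List.mem_of_mem_drop hb)
          simp [List.cons_prefix_cons]
        · simp only [List.mem_singleton] at hb
          subst hb
          simp [List.prefix_nil]
      · rw [List.pairwise_append]
        refine ⟨h2, List.pairwise_singleton _ _, ?_⟩
        intro a ha b hb
        simp only [List.mem_singleton] at hb
        subst hb
        obtain ⟨y, -, rfl⟩ := hheads a (List.mem_of_mem_drop ha)
        simp [List.prefix_nil]
    · intro a ha b hb
      obtain ⟨y, -, rfl⟩ := hheads a (List.mem_of_mem_take ha)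
      rcases List.mem_cons.1 hb with rfl | hb
      · simp [List.cons_prefix_cons]
      rcases List.mem_append.1 hb with hb | hb
      · exact h12 _ ha _ hb
      · simp only [List.mem_singleton] at hb
        subst hb
        simp [List.prefix_nil]

lemma hist_decomp {l : BTree} {L : List Pos}
    (h : Hist (node l (node leaf leaf)) L) :
    ∃ L' k, Hist l L' ∧ k ≤ L'.length ∧ L = assemble L' k := by
  have hnil : ([] : Pos) ∈ L := (h.2.1 []).2 (mem_internal_nc.2 (Or.inl rfl))
  obtain ⟨L₁, L₂, rfl⟩ := List.append_of_mem hnil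
  have hpw := h.2.2
  rw [List.pairwise_append] at hpw
  have h2 := hpw.2.1
  rw [List.pairwise_cons] at h2
  have hL₂ : L₂ = [] := List.eq_nil_iff_forall_not_mem.2
    (fun x hx => (h2.1 x hx) List.nil_prefix)
  subst hL₂
  have htr : ([true] : Pos) ∈ L₁ := by
    have := (h.2.1 [true]).2 (mem_internal_nc.2 (Or.inr (Or.inl rfl)))
    rcases List.mem_append.1 this with h' | h'
    · exact h'
    · simp at h'
  obtain ⟨A, B, rfl⟩ := List.append_of_mem htr
  have hnd := h.1
  rw [List.nodup_append] at hnd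
  have hnodup₁ : (A ++ ([true] : Pos) :: B).Nodup := hnd.1
  have hnil_not : ([] : Pos) ∉ A ++ ([true] : Pos) :: B :=
    fun hx => hnd.2.2 _ hx _ (by simp) rfl
  rw [List.nodup_append, List.nodup_cons] at hnodup₁
  have htrA : ([true] : Pos) ∉ A := fun hx => hnodup₁.2.2 _ hx _ (by simp) rfl
  have htrB : ([true] : Pos) ∉ B := hnodup₁.2.1.1
  have hshape : ∀ x ∈ A ++ B, ∃ y ∈ internalPos l, x = false :: y := by
    intro x hx
    have hxL : x ∈ (A ++ ([true] : Pos) :: B) ++ [([] : Pos)] := by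
      rcases List.mem_append.1 hx with h' | h'
      · exact List.mem_append.2 (Or.inl (List.mem_append.2 (Or.inl h')))
      · exact List.mem_append.2 (Or.inl (List.mem_append.2
          (Or.inr (List.mem_cons.2 (Or.inr h')))))
    rcases mem_internal_nc.1 ((h.2.1 x).1 hxL) with rfl | rfl | hy
    · exact absurd (by
        rcases List.mem_append.1 hx with h' | h'
        · exact List.mem_append.2 (Or.inl h')
        · exact List.mem_append.2 (Or.inr (List.mem_cons.2 (Or.inr h')))) hnil_not
    · rcases List.mem_append.1 hx with h' | h'
      · exact absurd h' htrA
      · exact absurd h' htrB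
    · exact hy
  have hcons : (A ++ B).map (fun y : Pos => false :: y.tail) = A ++ B := by
    rw [List.map_congr_left (fun x hx => ?_), List.map_id]
    obtain ⟨y, -, rfl⟩ := hshape x hx
    rfl
  have hMeq : ((A ++ B).map List.tail).map (false :: ·) = A ++ B := by
    rw [List.map_map]
    exact hcons
  have hABsub : List.Sublist (A ++ B) ((A ++ ([true] : Pos) :: B) ++ [([] : Pos)]) :=
    (((List.sublist_cons_self ([true] : Pos) B).append_left A).trans
      (List.sublist_append_left _ _))
  have hABnodup : (A ++ B).Nodup := hABsub.nodup h.1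
  refine ⟨(A ++ B).map List.tail, A.length, ⟨?_, ?_, ?_⟩, ?_, ?_⟩
  · refine List.Nodup.of_map ((false : Bool) :: ·) ?_
    rw [hMeq]
    exact hABnodup
  · intro p
    constructor
    · intro hp
      obtain ⟨x, hx, rfl⟩ := List.mem_map.1 hp
      obtain ⟨y, hy, rfl⟩ := hshape x hx
      exact hy
    · intro hp
      have : false :: p ∈ A ++ ([true] : Pos) :: B := by
        have hmem : (false :: p : Pos) ∈ (A ++ ([true] : Pos) :: B) ++ [([] : Pos)] :=
          (h.2.1 _).2 (mem_internal_nc.2 (Or.inr (Or.inr ⟨p, hp, rfl⟩)))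
        rcases List.mem_append.1 hmem with h' | h'
        · exact h'
        · simp at h'
      have hAB : (false :: p : Pos) ∈ A ++ B := by
        rcases List.mem_append.1 this with h' | h'
        · exact List.mem_append.2 (Or.inl h')
        · rcases List.mem_cons.1 h' with h'' | h''
          · simp at h''
          · exact List.mem_append.2 (Or.inr h'')
      exact List.mem_map.2 ⟨false :: p, hAB, rfl⟩
  · have hABpw : (A ++ B).Pairwise (fun a b => ¬ a <+: b) :=
      List.Pairwise.sublist hABsub h.2.2
    rw [List.pairwise_map]
    refine hABpw.imp_of_mem (fun {a b} ha hb hab h' => hab ?_)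
    obtain ⟨y, -, rfl⟩ := hshape a ha
    obtain ⟨z, -, rfl⟩ := hshape b hb
    exact List.cons_prefix_cons.2 ⟨rfl, h'⟩
  · simp
  · rw [assemble, hMeq, List.take_left, List.drop_left, List.append_assoc]
    rfl

lemma disasm_spec {l : BTree} {L : List Pos}
    (h : Hist (node l (node leaf leaf)) L) :
    Hist l ((L.filter (fun p => p.head? == some false)).map List.tail) ∧
      insPt L ≤ (internalPos l).card ∧
      L = assemble ((L.filter (fun p => p.head? == some false)).map List.tail)
        (insPt L) := by
  obtain ⟨L', k, h', hk, rfl⟩ := hist_decomp h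
  rw [filter_assemble, insPt_assemble L' k hk]
  exact ⟨h', by rw [hist_length h'] at hk; exact hk, rfl⟩

noncomputable def histEquiv (l : BTree) :
    {L // Hist (node l (node leaf leaf)) L} ≃
      {L // Hist l L} × Fin ((internalPos l).card + 1) where
  toFun L := ⟨⟨(L.1.filter (fun p => p.head? == some false)).map List.tail,
      (disasm_spec L.2).1⟩,
    ⟨insPt L.1, Nat.lt_succ_of_le (disasm_spec L.2).2.1⟩⟩
  invFun Lk := ⟨assemble Lk.1.1 Lk.2.1,
    hist_assemble Lk.1.2 (by rw [hist_length Lk.1.2]; exact Nat.lt_succ_iff.1 Lk.2.2)⟩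
  left_inv := by
    rintro ⟨L, hL⟩
    exact Subtype.ext (disasm_spec hL).2.2.symm
  right_inv := by
    rintro ⟨⟨L', hL'⟩, ⟨k, hk⟩⟩
    have hkle : k ≤ L'.length := by
      rw [hist_length hL']; exact Nat.lt_succ_iff.1 hk
    refine Prod.ext (Subtype.ext ?_) (Fin.ext ?_)
    · exact filter_assemble L' k
    · exact insPt_assemble L' k hkle

lemma numHist_eq_card_hist (S : BTree) :
    numHist S = Nat.card {L // Hist S L} :=
  Nat.card_congr (Equiv.subtypeEquivRight (fun _ => isLabHist_iff_hist))

lemma numHist_nc (l : BTree) :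
    numHist (node l (node leaf leaf)) = numHist l * ((internalPos l).card + 1) := by
  rw [numHist_eq_card_hist, numHist_eq_card_hist, Nat.card_congr (histEquiv l),
    Nat.card_prod]
  simp

lemma hist_cherry_iff (L : List Pos) :
    IsLabHist (node leaf leaf) L ↔ L = [([] : Pos)] := by
  rw [isLabHist_iff_hist]
  constructor
  · rintro ⟨h1, h2, h3⟩
    have hmem : ∀ p ∈ L, p = ([] : Pos) := by
      intro p hp
      have := (h2 p).1 hp
      rw [internalPos_cherry, Finset.mem_singleton] at this
      exact this
    have hnil : ([] : Pos) ∈ L := (h2 []).2 (by rw [internalPos_cherry]; simp)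
    cases L with
    | nil => simp at hnil
    | cons a t =>
        have ha := hmem a List.mem_cons_self
        subst ha
        rw [List.nodup_cons] at h1
        cases t with
        | nil => rfl
        | cons b s =>
            have hb := hmem b (List.mem_cons.2 (Or.inr List.mem_cons_self))
            subst hb
            exact absurd List.mem_cons_self h1.1
  · rintro rfl
    refine ⟨by simp, fun p => ?_, List.pairwise_singleton _ _⟩
    rw [internalPos_cherry]
    simp

lemma numHist_cherry : numHist (node leaf leaf) = 1 := by
  rw [numHist]
  haveI : Unique {L : List Pos // IsLabHist (node leaf leaf) L} := by
    refine ⟨⟨⟨[([] : Pos)], (hist_cherry_iff _).2 rfl⟩⟩, ?_⟩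
    rintro ⟨L, hL⟩
    exact Subtype.ext ((hist_cherry_iff L).1 hL)
  exact Nat.card_unique

lemma numConfigs_leaf : numConfigs leaf = 0 := by
  rw [numConfigs]
  haveI : IsEmpty {A // IsConfig leaf A} := ⟨fun A => not_isConfig_leaf A.1 A.2⟩
  exact Nat.card_of_isEmpty

lemma numConfigs_cherry : numConfigs (node leaf leaf) = 1 := by
  rw [numConfigs_node, numConfigs_leaf]

lemma internalPos_leaf : internalPos leaf = ∅ := rfl

lemma card_internal_mod (n : ℕ) :
    (internalPos (modLodgepole n)).card = 2 * n + 1 := by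
  induction n with
  | zero =>
      show (internalPos (node leaf leaf)).card = 1
      rw [card_internalPos_node, internalPos_leaf]
      simp
  | succ n ih =>
      show (internalPos (node (modLodgepole n) (node leaf leaf))).card = _
      rw [card_internalPos_node, ih, card_internalPos_node, internalPos_leaf]
      simp
      ring

end BTree
/-- For the modified lodgepole tree `M_n`, the number of root ancestral
configurations is `3 * 2^n - 2` and the number of labeled histories is
`(2n)!! = 2 * 4 * 6 * ⋯ * (2n)`. -/
theorem modLodgepole_counts (n : ℕ) :
    numConfigs (modLodgepole n) = 3 * 2 ^ n - 2 ∧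
    numHist (modLodgepole n) = ∏ i ∈ Finset.range n, (2 * i + 2) := by
  induction n with
  | zero =>
      constructor
      · show numConfigs (node leaf leaf) = 1
        exact numConfigs_cherry
      · show numHist (node leaf leaf) = _
        simpa using numHist_cherry
  | succ n ih =>
      obtain ⟨hc, hh⟩ := ih
      constructor
      · show numConfigs (node (modLodgepole n) (node leaf leaf)) = _
        rw [numConfigs_node, hc, numConfigs_cherry]
        have h1 : 1 ≤ 2 ^ n := Nat.one_le_two_pow
        rw [pow_succ]
        omega
      · show numHist (node (modLodgepole n) (node leaf leaf)) = _
        rw [numHist_nc, hh, card_internal_mod, Finset.prod_range_succ]
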